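/- Let 𝔪 = Σ_{i∈I} Δ_i be a finite multisegment with depth function 𝔡, and let i₁, i₂ ∈ I with 𝔡(i₁) = 𝔡(i₂) and Δ_{i₂} ⊆ Δ_{i₁}. Then for any i ∈ I with Δ_{i₂} ⊆ Δ_i ⊆ Δ_{i₁} and 𝔡(i) > 𝔡(i₁), there exists j ∈ I with Δ_{i₂} ⊆ Δ_j ⊆ Δ_{i₁}, 𝔡(j) = 𝔡(i₁), and Δ_i ≪ Δ_j. -/
import Mathlib


/-- A segment `[a,b]` of integers with `a ≤ b`. -/
structure Segment where
  a : ℤ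
  b : ℤ
  hle : a ≤ b

namespace Segment

/-- `s ≪ t` iff both the begin and end points of `s` are strictly smaller. -/
def ll (s t : Segment) : Prop := s.a < t.a ∧ s.b < t.b

/-- Containment of segments: `s ⊆ t`. -/
def sub (s t : Segment) : Prop := t.a ≤ s.a ∧ s.b ≤ t.b

/-- Strict containment of segments: `s ⊊ t`. -/
def ssub (s t : Segment) : Prop := sub s t ∧ s ≠ t

end Segment

/-- There is a `≪`-ascending chain of length `j` in the family `Δ` starting at index `i`. -/
def ChainFrom {I : Type*} (Δ : I → Segment) (i : I) (j : ℕ) : Prop :=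
  ∃ f : Fin (j + 1) → I, f 0 = i ∧
    ∀ r : Fin j, Segment.ll (Δ (f r.castSucc)) (Δ (f r.succ))

/-- `d` is the depth function of the multisegment `Δ`: `d i` is the maximal length of a
`≪`-ascending chain starting at `Δ i`. -/
def IsDepth {I : Type*} (Δ : I → Segment) (d : I → ℕ) : Prop :=
  ∀ i, IsGreatest {j | ChainFrom Δ i j} (d i)

lemma ll_trans {s t u : Segment} (h1 : Segment.ll s t) (h2 : Segment.ll t u) :
    Segment.ll s u := ⟨h1.1.trans h2.1, h1.2.trans h2.2⟩

lemma chain_cons {I : Type*} {Δ : I → Segment} {i j : I} {m : ℕ}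
    (h : Segment.ll (Δ i) (Δ j)) (hc : ChainFrom Δ j m) : ChainFrom Δ i (m + 1) := by
  obtain ⟨g, hg0, hg⟩ := hc
  refine ⟨Fin.cases i g, Fin.cases_zero, ?_⟩
  intro r
  induction r using Fin.cases with
  | zero =>
    simp only [Fin.castSucc_zero, Fin.cases_zero, Fin.cases_succ, hg0]
    exact h
  | succ s =>
    rw [← Fin.succ_castSucc]
    simp only [Fin.cases_succ]
    exact hg s

lemma chain_tail {I : Type*} {Δ : I → Segment} {i : I} {m : ℕ}
    (hc : ChainFrom Δ i (m + 1)) : ∃ j, Segment.ll (Δ i) (Δ j) ∧ ChainFrom Δ j m := by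
  obtain ⟨f, hf0, hf⟩ := hc
  refine ⟨f 1, ?_, fun k => f k.succ, rfl, ?_⟩
  · have := hf 0
    rwa [Fin.castSucc_zero, hf0, Fin.succ_zero_eq_one] at this
  · intro r
    have := hf r.succ
    rwa [← Fin.succ_castSucc] at this

lemma lt_of_ll {I : Type*} {Δ : I → Segment} {d : I → ℕ} (hd : IsDepth Δ d) {i j : I}
    (h : Segment.ll (Δ i) (Δ j)) : d j < d i := by
  have h1 : ChainFrom Δ j (d j) := (hd j).1
  have h2 : ChainFrom Δ i (d j + 1) := chain_cons h h1
  exact Nat.lt_of_succ_le ((hd i).2 h2)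

theorem exists_between_depth {I : Type*} [Fintype I] (Δ : I → Segment) (d : I → ℕ)
    (hd : IsDepth Δ d) (i₁ i₂ : I) (h12 : d i₁ = d i₂)
    (hsub : Segment.sub (Δ i₂) (Δ i₁)) (i : I)
    (h2i : Segment.sub (Δ i₂) (Δ i)) (hi1 : Segment.sub (Δ i) (Δ i₁))
    (hgt : d i > d i₁) :
    ∃ j, Segment.sub (Δ i₂) (Δ j) ∧ Segment.sub (Δ j) (Δ i₁) ∧
      d j = d i₁ ∧ Segment.ll (Δ i) (Δ j) := by
  have key : ∀ n : ℕ, ∀ i : I, d i ≤ n → Segment.sub (Δ i₂) (Δ i) →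
      Segment.sub (Δ i) (Δ i₁) → d i₁ < d i →
      ∃ j, Segment.sub (Δ i₂) (Δ j) ∧ Segment.sub (Δ j) (Δ i₁) ∧
        d j = d i₁ ∧ Segment.ll (Δ i) (Δ j) := by
    intro n
    induction n with
    | zero => intro i hn _ _ hlt; omega
    | succ n ih =>
      intro i hn h2i hi1 hlt
      obtain ⟨m, hm⟩ : ∃ m, d i = m + 1 := ⟨d i - 1, by omega⟩
      have hc : ChainFrom Δ i (m + 1) := hm ▸ (hd i).1
      obtain ⟨j, hll, hcj⟩ := chain_tail hc
      have hdjm : m ≤ d j := (hd j).2 hcj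
      have hdji : d j < d i := lt_of_ll hd hll
      have hj1 : d i₁ ≤ d j := by omega
      -- Δ i₂ ⊆ Δ j
      have h2j : Segment.sub (Δ i₂) (Δ j) := by
        refine ⟨?_, le_of_lt (lt_of_le_of_lt h2i.2 hll.2)⟩
        by_contra hcon
        push_neg at hcon
        have : Segment.ll (Δ i₂) (Δ j) := ⟨hcon, lt_of_le_of_lt h2i.2 hll.2⟩
        have := lt_of_ll hd this
        omega
      -- Δ j ⊆ Δ i₁
      have hj1' : Segment.sub (Δ j) (Δ i₁) := by
        refine ⟨le_of_lt (lt_of_le_of_lt hi1.1 hll.1), ?_⟩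
        by_contra hcon
        push_neg at hcon
        have : Segment.ll (Δ i₁) (Δ j) := ⟨lt_of_le_of_lt hi1.1 hll.1, hcon⟩
        have := lt_of_ll hd this
        omega
      rcases eq_or_lt_of_le hj1 with heq | hltj
      · exact ⟨j, h2j, hj1', heq.symm, hll⟩
      · obtain ⟨j', h1, h2, h3, h4⟩ := ih j (by omega) h2j hj1' hltj
        exact ⟨j', h1, h2, h3, ll_trans hll h4⟩
  exact key (d i) i le_rfl h2i hi1 hgt
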